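/- For every prime power $q$ and integers $s \ge 3$ and $k \ge s+3$, we have $\frac{q^3}{(q^2-1)(q-1)} \le q^{-s(k-s)}\binom{k}{s}_q$. -/

import Mathlib

lemma key_scalar (Q : ℚ) (hQ : 2 ≤ Q) (s : ℕ) (hs : 3 ≤ s) :
    Q ^ (3*s+3) * (Q^3 - 1) ≤ (Q^(s+1)-1) * ((Q^(s+2)-1) * (Q^(s+3)-1)) := by
  have h1 : (1:ℚ) ≤ Q := by linarith
  have hQ0 : (0:ℚ) ≤ Q := by linarith
  have ht : Q^3 ≤ Q^s := pow_le_pow_right₀ h1 hs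
  have htpos : (0:ℚ) < Q^s := by positivity
  have ht1 : (1:ℚ) ≤ Q^s := one_le_pow₀ h1
  set t := Q^s with htdef
  have k5 : 0 ≤ (Q-2) * Q^5 := mul_nonneg (by linarith) (by positivity)
  have k4 : 0 ≤ (Q-2) * Q^4 := mul_nonneg (by linarith) (by positivity)
  have k3 : 0 ≤ (Q-2) * Q^3 := mul_nonneg (by linarith) (by positivity)
  have k8 : (1:ℚ) ≤ Q^3 := one_le_pow₀ h1
  have hA : Q^5 + Q^4 + Q^3 + 1 ≤ Q^6 := by nlinarith [k5, k4, k3, k8]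
  have hB : Q^6 * t^2 ≤ Q^3 * t^3 := by
    nlinarith [mul_nonneg (mul_nonneg (by positivity : (0:ℚ) ≤ Q^3) (by positivity : (0:ℚ) ≤ t^2)) (by linarith : (0:ℚ) ≤ t - Q^3)]
  have hA' : (Q^5 + Q^4 + Q^3 + 1) * t^2 ≤ Q^6 * t^2 :=
    mul_le_mul_of_nonneg_right hA (by positivity)
  have ht2 : (1:ℚ) ≤ t^2 := by nlinarith
  have hpos : (0:ℚ) ≤ (Q^3+Q^2+Q)*t := by positivity
  have e1 : Q^(3*s+3) = Q^3 * t^3 := by rw [htdef, ← pow_mul, ← pow_add]; ring_nf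
  have e2 : Q^(s+1) = t * Q := by rw [htdef, pow_succ]
  have e3 : Q^(s+2) = t * Q^2 := by rw [htdef, pow_add]
  have e4 : Q^(s+3) = t * Q^3 := by rw [htdef, pow_add]
  rw [e1, e2, e3, e4]
  nlinarith [hA', hB, ht2, hpos]



/-- The Gaussian (q-binomial) coefficient, as a rational number. -/
noncomputable def qbin (q k s : ℕ) : ℚ :=
  (∏ i ∈ Finset.range s, ((q : ℚ) ^ (k - i) - 1)) /
    (∏ i ∈ Finset.range s, ((q : ℚ) ^ (s - i) - 1))

/-- For every prime power `q`, `s ≥ 3` and `k ≥ s + 3`,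
`q³/((q²-1)(q-1)) ≤ q^(-s(k-s)) [k choose s]_q`. -/
theorem qbin_lower_estimate (q k s : ℕ) (hq : IsPrimePow q) (hs : 3 ≤ s) (hk : s + 3 ≤ k) :
    (q : ℚ) ^ 3 / (((q : ℚ) ^ 2 - 1) * ((q : ℚ) - 1)) ≤ qbin q k s / (q : ℚ) ^ (s * (k - s)) := by
  -- proof

  have hq2 : 2 ≤ q := hq.two_le
  set Q : ℚ := (q : ℚ) with hQdef
  have hQ : (2:ℚ) ≤ Q := by rw [hQdef]; exact_mod_cast hq2
  have h1 : (1:ℚ) ≤ Q := by linarith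
  obtain ⟨d, hd⟩ : ∃ d, k - s = d + 3 := ⟨k - s - 3, by omega⟩
  have hfac : ∀ j : ℕ, (0:ℚ) < Q^(j+1) - 1 := by
    intro j
    have : (1:ℚ) < Q^(j+1) := one_lt_pow₀ (by linarith) (Nat.succ_ne_zero j)
    linarith
  have hfac' : ∀ j : ℕ, 1 ≤ j → (0:ℚ) < Q^j - 1 := by
    intro j hj
    obtain ⟨i, rfl⟩ : ∃ i, j = i + 1 := ⟨j - 1, by omega⟩
    exact hfac i
  set P := ∏ i ∈ Finset.range s, (Q^(i+1) - 1) with hPdef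
  set A := ∏ i ∈ Finset.range s, (Q^(i+4) - 1) with hAdef
  have hP : 0 < P := Finset.prod_pos fun i _ => hfac i
  have hA0 : 0 < A := Finset.prod_pos fun i _ => hfac' (i+4) (by omega)
  -- denominator reflected
  have hD : ∏ i ∈ Finset.range s, (Q^(s-i) - 1) = P := by
    rw [hPdef, ← Finset.prod_range_reflect (fun i => Q^(i+1) - 1) s]
    refine Finset.prod_congr rfl fun i hi => ?_
    rw [Finset.mem_range] at hi
    congr 2
    omega
  -- numerator reflected
  have hN : ∏ i ∈ Finset.range s, (Q^(k-i) - 1)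
      = ∏ i ∈ Finset.range s, (Q^(d+4+i) - 1) := by
    rw [← Finset.prod_range_reflect (fun i => Q^(d+4+i) - 1) s]
    refine Finset.prod_congr rfl fun i hi => ?_
    rw [Finset.mem_range] at hi
    congr 2
    omega
  set N := ∏ i ∈ Finset.range s, (Q^(k-i) - 1) with hNdef
  have hN0 : 0 < N := by
    rw [hN]
    exact Finset.prod_pos fun i _ => hfac' (d+4+i) (by omega)
  -- Step A : Q^(d*s) * A ≤ N
  have stepA : Q^(d*s) * A ≤ N := by
    rw [hN]
    calc Q^(d*s) * A = ∏ i ∈ Finset.range s, (Q^d * (Q^(i+4) - 1)) := by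
          rw [Finset.prod_mul_distrib, Finset.prod_const, Finset.card_range, ← pow_mul, ← hAdef]
      _ ≤ ∏ i ∈ Finset.range s, (Q^(d+4+i) - 1) := by
          refine Finset.prod_le_prod (fun i _ => ?_) (fun i _ => ?_)
          · exact mul_nonneg (by positivity) (le_of_lt (hfac' (i+4) (by omega)))
          · have e : Q^d * (Q^(i+4) - 1) = Q^(d+4+i) - Q^d := by
              rw [mul_sub, mul_one, ← pow_add]; congr 2; omega
            rw [e]
            have : (1:ℚ) ≤ Q^d := one_le_pow₀ h1
            linarith
  -- the product relation
  have relation : (Q-1) * ((Q^2-1) * (Q^3-1)) * A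
      = P * ((Q^(s+1)-1) * ((Q^(s+2)-1) * (Q^(s+3)-1))) := by
    have hsplit := Finset.prod_range_add (fun i => Q^(i+1) - 1) 3 s
    have h3 : ∏ i ∈ Finset.range 3, (Q^(i+1) - 1) = (Q-1) * ((Q^2-1) * (Q^3-1)) := by
      simp [Finset.prod_range_succ]
      ring
    have htail : ∏ i ∈ Finset.range s, (Q^(3+i+1) - 1) = A := by
      rw [hAdef]
      refine Finset.prod_congr rfl fun i _ => ?_
      congr 2
      omega
    have hleft : ∏ i ∈ Finset.range (3+s), (Q^(i+1) - 1)
        = P * ((Q^(s+1)-1) * ((Q^(s+2)-1) * (Q^(s+3)-1))) := by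
      have e : 3 + s = ((s+1)+1)+1 := by omega
      rw [e, Finset.prod_range_succ, Finset.prod_range_succ, Finset.prod_range_succ,
        show s+1+1 = s+2 from by omega, show s+2+1 = s+3 from by omega, hPdef]
      ring
    rw [h3, htail] at hsplit
    rw [← hsplit, hleft]
  -- positivity of denominators
  have hQ2 : (0:ℚ) < Q^2 - 1 := by nlinarith
  have hQ1 : (0:ℚ) < Q - 1 := by linarith
  have hQ3 : (0:ℚ) < Q^3 - 1 := by nlinarith
  have hden1 : (0:ℚ) < (Q^2 - 1) * (Q - 1) := mul_pos hQ2 hQ1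
  have hDpos : (0:ℚ) < ∏ i ∈ Finset.range s, (Q^(s-i) - 1) := by rw [hD]; exact hP
  have hden2 : (0:ℚ) < (∏ i ∈ Finset.range s, (Q^(s-i) - 1)) * Q^(s*(k-s)) :=
    mul_pos hDpos (by positivity)
  simp only [qbin, ← hQdef]
  rw [div_div, div_le_div_iff₀ hden1 hden2]
  rw [hD, hd, ← hNdef, show N * ((Q^2-1)*(Q-1)) = (Q^2-1)*(Q-1)*N from mul_comm _ _]
  -- goal : Q^3 * (P * Q^(s*(d+3))) ≤ (Q^2-1)*(Q-1)*N
  have key := key_scalar Q hQ s hs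
  have epow : Q^3 * Q^(s*(d+3)) = Q^(3*s+3) * Q^(d*s) := by
    rw [← pow_add, ← pow_add]; congr 1; ring
  have chain : (Q^3-1) * (Q^3 * (P * Q^(s*(d+3)))) ≤ (Q^3-1) * ((Q^2-1)*(Q-1)*N) := by
    calc (Q^3-1) * (Q^3 * (P * Q^(s*(d+3))))
        = (Q^(3*s+3) * (Q^3-1)) * (Q^(d*s) * P) := by linear_combination ((Q^3-1) * P) * epow
      _ ≤ ((Q^(s+1)-1) * ((Q^(s+2)-1) * (Q^(s+3)-1))) * (Q^(d*s) * P) :=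
          mul_le_mul_of_nonneg_right key (mul_nonneg (by positivity) (le_of_lt hP))
      _ = (Q^3-1) * ((Q^2-1)*(Q-1) * (Q^(d*s) * A)) := by
          linear_combination (-(Q^(d*s))) * relation
      _ ≤ (Q^3-1) * ((Q^2-1)*(Q-1) * N) := by
          refine mul_le_mul_of_nonneg_left ?_ (le_of_lt hQ3)
          exact mul_le_mul_of_nonneg_left stepA (le_of_lt hden1)
  exact (mul_le_mul_iff_right₀ hQ3).mp chain
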